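/- Let $\lambda_1,\ldots,\lambda_m \in \mathrm{Hom}_{\mathbb{R}}(\mathbb{R}^n,\mathbb{C})$ be distinct, let $M$ be a smooth compact manifold, and let $\beta_1,\ldots,\beta_m \in C^\infty(M)$. Then there exists a smooth compactly supported function $F$ on $M \times \mathbb{R}^n$ such that for each $j$ and each $p \in M$, $\int_{\mathbb{R}^n} F(p,x)\, e^{i\lambda_j(x)}\, dx = \beta_j(p)$. -/

import Mathlib

open MeasureTheory
open scoped Manifold ContDiff

namespace FLAux

variable {n m : ℕ}

lemma integrable_mul_exp {f : (Fin n → ℝ) → ℂ} (hf : Continuous f)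
    (hsupp : HasCompactSupport f) (L : (Fin n → ℝ) →ₗ[ℝ] ℂ) :
    Integrable (fun x => f x * Complex.exp (Complex.I * L x)) := by
  refine Continuous.integrable_of_hasCompactSupport ?_ (hsupp.mul_right)
  exact hf.mul (Complex.continuous_exp.comp
    (continuous_const.mul L.continuous_of_finiteDimensional))

lemma lin_eq_of_exp (L L' : (Fin n → ℝ) →ₗ[ℝ] ℂ)
    (h : ∀ x, Complex.exp (Complex.I * L x) = Complex.exp (Complex.I * L' x)) : L = L' := by
  refine LinearMap.ext fun x => ?_
  have key : ∀ a : ℂ, HasDerivAt (fun s : ℝ => Complex.exp (↑s * a)) a 0 := by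
    intro a
    have h1 : HasDerivAt (fun w : ℂ => Complex.exp (w * a)) a 0 := by
      simpa using ((hasDerivAt_id (0:ℂ)).mul_const a).cexp
    simpa using h1.comp_ofReal
  have heq : (fun s : ℝ => Complex.exp (↑s * (Complex.I * L x)))
      = fun s : ℝ => Complex.exp (↑s * (Complex.I * L' x)) := by
    funext s
    have := h (s • x)
    rw [L.map_smul, L'.map_smul, Complex.real_smul, Complex.real_smul] at this
    rw [mul_left_comm, mul_left_comm Complex.I] at this
    exact this
  have h1 := key (Complex.I * L x)
  have h2 : HasDerivAt (fun s : ℝ => Complex.exp (↑s * (Complex.I * L x)))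
      (Complex.I * L' x) 0 := heq ▸ key (Complex.I * L' x)
  have := h1.unique h2
  exact mul_left_cancel₀ Complex.I_ne_zero this

end FLAux

namespace FLAux

variable {n m : ℕ}

/-- The space of smooth compactly supported test functions as a submodule. -/
noncomputable def testFns (n : ℕ) : Submodule ℂ ((Fin n → ℝ) → ℂ) where
  carrier := {f | ContDiff ℝ ∞ f ∧ HasCompactSupport f}
  add_mem' := fun hf hg => ⟨hf.1.add hg.1, hf.2.add hg.2⟩
  zero_mem' := ⟨contDiff_const, by simp [HasCompactSupport, tsupport]⟩
  smul_mem' := fun c f hf => ⟨hf.1.const_smul c, hf.2.mono (Function.support_const_smul_subset c f)⟩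

noncomputable def T (Λ : Fin m → ((Fin n → ℝ) →ₗ[ℝ] ℂ)) : testFns n →ₗ[ℂ] (Fin m → ℂ) where
  toFun f := fun k => ∫ x, (f : (Fin n → ℝ) → ℂ) x * Complex.exp (Complex.I * Λ k x)
  map_add' := fun f g => by
    funext k
    simp only [Submodule.coe_add, Pi.add_apply, add_mul]
    exact integral_add (integrable_mul_exp f.2.1.continuous f.2.2 _)
      (integrable_mul_exp g.2.1.continuous g.2.2 _)
  map_smul' := fun c f => by
    funext k
    simp only [Submodule.coe_smul, Pi.smul_apply, smul_eq_mul, mul_assoc, RingHom.id_apply]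
    rw [← integral_const_mul]

set_option maxHeartbeats 1000000 in
lemma T_surjective (Λ : Fin m → ((Fin n → ℝ) →ₗ[ℝ] ℂ)) (hΛ : Function.Injective Λ) :
    Function.Surjective (T Λ) := by
  rw [← LinearMap.range_eq_top]
  by_contra hne
  obtain ⟨φ, hφ, hmap⟩ := (LinearMap.range (T Λ)).exists_dual_map_eq_bot_of_lt_top
    (lt_top_iff_ne_top.2 hne) inferInstance
  set c : Fin m → ℂ := fun k => φ (Pi.single k 1) with hc
  have hφv : ∀ v : Fin m → ℂ, φ v = ∑ k, v k * c k := by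
    intro v
    have : v = ∑ k, v k • (Pi.single k 1 : Fin m → ℂ) := by
      funext i; simp [Finset.sum_apply, Pi.single_apply]
    conv_lhs => rw [this]
    rw [map_sum]
    simp [hc, smul_eq_mul]
  -- the continuous function ∑ c k e^{iλ_k}
  set h : (Fin n → ℝ) → ℂ := fun x => ∑ k, c k * Complex.exp (Complex.I * Λ k x) with hh
  have hcont : Continuous h := by
    refine continuous_finset_sum _ fun k _ => continuous_const.mul ?_
    exact Complex.continuous_exp.comp
      (continuous_const.mul (Λ k).continuous_of_finiteDimensional)
  have hzero : ∀ᵐ x : Fin n → ℝ, h x = 0 := by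
    apply ae_eq_zero_of_integral_contDiff_smul_eq_zero hcont.locallyIntegrable
    intro g hg hgsupp
    have hg' : (fun x => (g x : ℂ)) ∈ testFns n := by
      refine ⟨Complex.ofRealCLM.contDiff.comp hg, ?_⟩
      have hss : Function.support (fun x => (g x : ℂ)) ⊆ Function.support g := by
        intro x hx
        simp only [Function.mem_support] at hx ⊢
        exact fun h0 => hx (by simp [h0])
      exact hgsupp.mono hss
    have hint : ∀ k : Fin m,
        Integrable (fun x => (g x : ℂ) * Complex.exp (Complex.I * Λ k x)) :=
      fun k => integrable_mul_exp hg'.1.continuous hg'.2 _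
    have : ∫ x, g x • h x = ∑ k, (T Λ ⟨_, hg'⟩ k) * c k := by
      calc ∫ x, g x • h x
          = ∫ x, ∑ k, c k * ((g x : ℂ) * Complex.exp (Complex.I * Λ k x)) := by
            congr 1; funext x
            rw [Complex.real_smul, hh, Finset.mul_sum]
            exact Finset.sum_congr rfl fun k _ => by ring
        _ = ∑ k, c k * ∫ x, (g x : ℂ) * Complex.exp (Complex.I * Λ k x) := by
            rw [integral_finset_sum _ fun k _ => (hint k).const_mul (c k)]
            exact Finset.sum_congr rfl fun k _ => integral_const_mul _ _
        _ = ∑ k, (T Λ ⟨_, hg'⟩ k) * c k := Finset.sum_congr rfl fun k _ => mul_comm _ _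
    rw [this, ← hφv]
    have : T Λ ⟨_, hg'⟩ ∈ LinearMap.range (T Λ) := ⟨_, rfl⟩
    have := hmap ▸ Submodule.mem_map_of_mem (f := φ) this
    simpa using this
  have hzero' : h = 0 := by
    exact (Continuous.ae_eq_iff_eq volume hcont continuous_const).1 hzero
  -- Dedekind independence of characters
  set χ : Fin m → (Multiplicative (Fin n → ℝ) →* ℂ) := fun k =>
    { toFun := fun x => Complex.exp (Complex.I * Λ k (Multiplicative.toAdd x))
      map_one' := by simp
      map_mul' := fun x y => by
        simp only [toAdd_mul, map_add, mul_add, Complex.exp_add] } with hχ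
  have hχinj : Function.Injective χ := by
    intro a b hab
    apply hΛ
    refine lin_eq_of_exp _ _ fun x => ?_
    exact DFunLike.congr_fun hab (Multiplicative.ofAdd x)
  have hli : LinearIndependent ℂ fun k => ⇑(χ k) :=
    (linearIndependent_monoidHom (Multiplicative (Fin n → ℝ)) ℂ).comp χ hχinj
  have hc0 : ∀ k, c k = 0 := by
    have := Fintype.linearIndependent_iff.1 hli c ?_
    · exact this
    · funext y
      have := congrFun hzero' (Multiplicative.toAdd y)
      simpa [hh, hχ] using this
  apply hφ
  apply LinearMap.ext fun v => ?_
  rw [hφv]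
  simp [hc0]

end FLAux

namespace FLAux

variable {n m : ℕ}

lemma exists_dual_test (Λ : Fin m → ((Fin n → ℝ) →ₗ[ℝ] ℂ)) (hΛ : Function.Injective Λ) :
    ∃ g : Fin m → (Fin n → ℝ) → ℂ,
      (∀ j, ContDiff ℝ ∞ (g j)) ∧ (∀ j, HasCompactSupport (g j)) ∧
      ∀ j k, (∫ x, g j x * Complex.exp (Complex.I * Λ k x))
        = if j = k then 1 else 0 := by
  have hs := T_surjective Λ hΛ
  choose u hu using fun j => hs (Pi.single j 1)
  refine ⟨fun j => (u j : (Fin n → ℝ) → ℂ), fun j => (u j).2.1, fun j => (u j).2.2,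
    fun j k => ?_⟩
  have := congrFun (hu j) k
  simp only [T, LinearMap.coe_mk, AddHom.coe_mk] at this
  rw [this, Pi.single_apply]
  simp [eq_comm]

end FLAux

open scoped Manifold ContDiff

instance FLAux.smoothRingComplex : ContMDiffRing 𝓘(ℝ, ℂ) ∞ ℂ :=
  { instNormedSpaceLieAddGroup with
    contMDiff_mul := by
      rw [contMDiff_iff]
      refine ⟨continuous_mul, fun x y => ?_⟩
      simp only [mfld_simps, chartAt_self_eq]
      rw [contDiffOn_univ]
      exact contDiff_fst.mul contDiff_snd }


/-- For distinct `ℝ`-linear maps `λ₁,…,λₘ : ℝⁿ → ℂ`, a smooth compact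
manifold `M`, and smooth functions `β₁,…,βₘ` on `M`, there exists a smooth compactly
supported function `F` on `M × ℝⁿ` whose Fourier–Laplace transform in the second variable
satisfies `∫ F(p,x) e^{iλⱼ(x)} dx = βⱼ(p)` for every `j` and `p`. -/
theorem exists_smooth_function_with_prescribed_fourier_laplace_values
    {EM HM : Type*} [NormedAddCommGroup EM] [NormedSpace ℝ EM] [TopologicalSpace HM]
    (IM : ModelWithCorners ℝ EM HM) (M : Type*) [TopologicalSpace M] [ChartedSpace HM M]
    [IsManifold IM (⊤ : ℕ∞) M] [CompactSpace M]
    {n m : ℕ} (Λ : Fin m → ((Fin n → ℝ) →ₗ[ℝ] ℂ)) (hΛ : Function.Injective Λ)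
    (β : Fin m → M → ℂ) (hβ : ∀ j, ContMDiff IM 𝓘(ℝ, ℂ) (⊤ : ℕ∞) (β j)) :
    ∃ F : M × (Fin n → ℝ) → ℂ,
      ContMDiff (IM.prod 𝓘(ℝ, Fin n → ℝ)) 𝓘(ℝ, ℂ) (⊤ : ℕ∞) F ∧
      HasCompactSupport F ∧
      ∀ (j : Fin m) (p : M),
        (∫ x : Fin n → ℝ, F (p, x) * Complex.exp (Complex.I * Λ j x)) = β j p := by
  obtain ⟨g, hgsm, hgsupp, hgint⟩ := FLAux.exists_dual_test Λ hΛ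
  refine ⟨fun q => ∑ j, β j q.1 * g j q.2, ?_, ?_, ?_⟩
  · refine contMDiff_finset_sum fun j _ => ?_
    exact ((hβ j).comp contMDiff_fst).mul (((hgsm j).contMDiff).comp contMDiff_snd)
  · have hK : IsCompact (⋃ j, tsupport (g j)) := isCompact_iUnion fun j => hgsupp j
    apply IsCompact.of_isClosed_subset (isCompact_univ.prod hK)
      (isClosed_tsupport _)
    apply closure_minimal _ (isClosed_univ.prod (isClosed_iUnion_of_finite
      fun j => isClosed_tsupport (g j)))
    intro q hq
    simp only [Function.mem_support] at hq
    refine ⟨trivial, ?_⟩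
    by_contra hx
    simp only [Set.mem_iUnion, not_exists] at hx
    apply hq
    refine Finset.sum_eq_zero fun j _ => ?_
    have : g j q.2 = 0 := by
      by_contra h0
      exact hx j (subset_tsupport _ h0)
    simp [this]
  · intro k p
    have hint : ∀ j : Fin m,
        Integrable (fun x => β j p * (g j x * Complex.exp (Complex.I * Λ k x))) :=
      fun j => (FLAux.integrable_mul_exp (hgsm j).continuous (hgsupp j) _).const_mul _
    calc ∫ x, (∑ j, β j p * g j x) * Complex.exp (Complex.I * Λ k x)
        = ∫ x, ∑ j, β j p * (g j x * Complex.exp (Complex.I * Λ k x)) := by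
          congr 1; funext x
          rw [Finset.sum_mul]
          exact Finset.sum_congr rfl fun j _ => by ring
      _ = ∑ j, β j p * ∫ x, g j x * Complex.exp (Complex.I * Λ k x) := by
          rw [integral_finset_sum _ fun j _ => hint j]
          exact Finset.sum_congr rfl fun j _ => integral_const_mul _ _
      _ = β k p := by
          rw [Finset.sum_congr rfl fun j _ => by rw [hgint j k]]
          simp
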